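/- arXiv:2510.11980 — 2 statements merged into one kernel-verified Lean document; each statement's English description precedes it below -/
import Mathlib

section
/- Let n ≥ 4 and let i be an index with 2i ≠ n+1, and set i' = n+1−i. The number of equi-n-squares whose row i, row i', column i, and column i' are each consecutive or reverse-consecutive equals 2·(n²−4n+4)! / ((n−2)!² · (n−4)!^{n−2}). -/
open Nat Finset Filter

/-- An equi-`n`-square: an `n × n` array with entries in `Fin n` in which
every value appears exactly `n` times. -/
def IsEquiSquare (n : ℕ) (g : Fin n → Fin n → Fin n) : Prop :=
  ∀ k : Fin n, Nat.card {p : Fin n × Fin n // g p.1 p.2 = k} = n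

/-- Row `i` is consecutive (1-indexed: entry in column `j` is `j`). -/
def RowConsec {n : ℕ} (g : Fin n → Fin n → Fin n) (i : Fin n) : Prop :=
  ∀ j : Fin n, g i j = j

/-- Row `i` is reverse-consecutive (1-indexed: entry in column `j` is `n+1-j`). -/
def RowRevConsec {n : ℕ} (g : Fin n → Fin n → Fin n) (i : Fin n) : Prop :=
  ∀ j : Fin n, (g i j : ℕ) + (j : ℕ) + 1 = n

/-- Column `j` is consecutive (1-indexed: entry in row `i` is `i`). -/
def ColConsec {n : ℕ} (g : Fin n → Fin n → Fin n) (j : Fin n) : Prop :=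
  ∀ i : Fin n, g i j = i

/-- Column `j` is reverse-consecutive (1-indexed: entry in row `i` is `n+1-i`). -/
def ColRevConsec {n : ℕ} (g : Fin n → Fin n → Fin n) (j : Fin n) : Prop :=
  ∀ i : Fin n, (g i j : ℕ) + (i : ℕ) + 1 = n

def Pat1 {n : ℕ} (i : Fin n) (g : Fin n → Fin n → Fin n) : Prop :=
  RowConsec g i ∧ RowRevConsec g (Fin.rev i) ∧ ColConsec g i ∧ ColRevConsec g (Fin.rev i)
def Pat2 {n : ℕ} (i : Fin n) (g : Fin n → Fin n → Fin n) : Prop :=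
  RowRevConsec g i ∧ RowConsec g (Fin.rev i) ∧ ColRevConsec g i ∧ ColConsec g (Fin.rev i)

lemma resolve {n : ℕ} (i : Fin n) (hi : 2 * ((i : ℕ) + 1) ≠ n + 1)
    (g : Fin n → Fin n → Fin n) :
    ((RowConsec g i ∨ RowRevConsec g i) ∧
        (RowConsec g (Fin.rev i) ∨ RowRevConsec g (Fin.rev i)) ∧
        (ColConsec g i ∨ ColRevConsec g i) ∧
        (ColConsec g (Fin.rev i) ∨ ColRevConsec g (Fin.rev i))) ↔ (Pat1 i g ∨ Pat2 i g) := by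
  constructor
  · rintro ⟨h1 | h1, h2 | h2, h3 | h3, h4 | h4⟩ <;>
    [skip; skip; skip; skip; skip; skip; skip; skip; skip; skip; skip; skip; skip; skip;
     skip; skip] <;>
    first
      | exact Or.inl ⟨h1, h2, h3, h4⟩
      | exact Or.inr ⟨h1, h2, h3, h4⟩
      | (exfalso;
         have a1 := h1 i; have a2 := h1 (Fin.rev i);
         have b1 := h2 i; have b2 := h2 (Fin.rev i);
         have c1 := h3 i; have c2 := h3 (Fin.rev i);
         have d1 := h4 i; have d2 := h4 (Fin.rev i);
         have hlt := i.isLt;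
         simp only [Fin.ext_iff, Fin.val_rev] at a1 a2 b1 b2 c1 c2 d1 d2;
         omega)
  · rintro (⟨h1, h2, h3, h4⟩ | ⟨h1, h2, h3, h4⟩)
    · exact ⟨Or.inl h1, Or.inr h2, Or.inl h3, Or.inr h4⟩
    · exact ⟨Or.inr h1, Or.inl h2, Or.inr h3, Or.inl h4⟩

lemma not_pat1_and_pat2 {n : ℕ} (i : Fin n) (hi : 2 * ((i : ℕ) + 1) ≠ n + 1)
    (g : Fin n → Fin n → Fin n) : ¬(Pat1 i g ∧ Pat2 i g) := by
  rintro ⟨⟨h1, -, -, -⟩, ⟨h1', -, -, -⟩⟩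
  have a1 := h1 i
  have a2 := h1' i
  have hlt := i.isLt
  simp only [Fin.ext_iff] at a1
  omega

variable {n : ℕ} (i : Fin n)

abbrev Cmpl (i : Fin n) : Type := {a : Fin n // a ≠ i ∧ a ≠ Fin.rev i}

def build (f : Cmpl i × Cmpl i → Fin n) : Fin n → Fin n → Fin n := fun a b =>
  if ha : a = i then b
  else if ha' : a = Fin.rev i then Fin.rev b
  else if hb : b = i then a
  else if hb' : b = Fin.rev i then Fin.rev a
  else f (⟨a, ha, ha'⟩, ⟨b, hb, hb'⟩)

variable (hii : Fin.rev i ≠ i)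

lemma rev_val (a : Fin n) : (Fin.rev a : ℕ) = n - 1 - a := by
  rw [Fin.val_rev]; omega

include hii in
lemma build_pat1 (f : Cmpl i × Cmpl i → Fin n) : Pat1 i (build i f) := by
  refine ⟨fun j => by simp [build], fun j => ?_, fun a => ?_, fun a => ?_⟩
  · show (build i f (Fin.rev i) j : ℕ) + j + 1 = n
    unfold build
    rw [dif_neg hii, dif_pos rfl, rev_val]
    have := j.isLt; omega
  · show build i f a i = a
    unfold build
    by_cases h1 : a = i
    · subst h1; rw [dif_pos rfl]
    · rw [dif_neg h1]
      by_cases h2 : a = Fin.rev i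
      · subst h2; rw [dif_pos rfl]
      · rw [dif_neg h2, dif_pos rfl]
  · show (build i f a (Fin.rev i) : ℕ) + a + 1 = n
    unfold build
    by_cases h1 : a = i
    · subst h1; rw [dif_pos rfl, rev_val]; have := a.isLt; omega
    · rw [dif_neg h1]
      by_cases h2 : a = Fin.rev i
      · subst h2
        rw [dif_pos rfl, Fin.rev_rev, rev_val]
        have := i.isLt; omega
      · rw [dif_neg h2, dif_neg hii, dif_pos rfl, rev_val]
        have := a.isLt; omega

include hii in
lemma build_restrict (g : Fin n → Fin n → Fin n) (hg : Pat1 i g) (a b : Fin n) :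
    build i (fun q => g q.1.1 q.2.1) a b = g a b := by
  obtain ⟨h1, h2, h3, h4⟩ := hg
  unfold build
  by_cases ha : a = i
  · subst ha; rw [dif_pos rfl, h1 b]
  · rw [dif_neg ha]
    by_cases ha' : a = Fin.rev i
    · subst ha'
      rw [dif_pos rfl]
      have := h2 b
      have := (g (Fin.rev i) b).isLt
      have := b.isLt
      apply Fin.ext
      rw [rev_val]
      omega
    · rw [dif_neg ha']
      by_cases hb : b = i
      · subst hb; rw [dif_pos rfl, h3 a]
      · rw [dif_neg hb]
        by_cases hb' : b = Fin.rev i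
        · subst hb'
          rw [dif_pos rfl]
          have := h4 a
          have := (g a (Fin.rev i)).isLt
          have := a.isLt
          apply Fin.ext
          rw [rev_val]
          omega
        · rw [dif_neg hb']

include hii in
lemma build_eq_iff (f : Cmpl i × Cmpl i → Fin n) (k : Fin n) (p : Fin n × Fin n) :
    build i f p.1 p.2 = k ↔ (p = (i, k) ∨ p = (Fin.rev i, Fin.rev k) ∨ p = (k, i) ∨
      p = (Fin.rev k, Fin.rev i) ∨ ∃ q : Cmpl i × Cmpl i, f q = k ∧ p = (q.1.1, q.2.1)) := by
  obtain ⟨a, b⟩ := p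
  simp only [Prod.mk.injEq]
  constructor
  · intro h
    unfold build at h
    by_cases ha : a = i
    · rw [dif_pos ha] at h; exact Or.inl ⟨ha, h⟩
    · rw [dif_neg ha] at h
      by_cases ha' : a = Fin.rev i
      · rw [dif_pos ha'] at h
        exact Or.inr (Or.inl ⟨ha', by rw [← h, Fin.rev_rev]⟩)
      · rw [dif_neg ha'] at h
        by_cases hb : b = i
        · rw [dif_pos hb] at h; exact Or.inr (Or.inr (Or.inl ⟨h, hb⟩))
        · rw [dif_neg hb] at h
          by_cases hb' : b = Fin.rev i
          · rw [dif_pos hb'] at h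
            exact Or.inr (Or.inr (Or.inr (Or.inl ⟨by rw [← h, Fin.rev_rev], hb'⟩)))
          · rw [dif_neg hb'] at h
            exact Or.inr (Or.inr (Or.inr (Or.inr ⟨(⟨a, ha, ha'⟩, ⟨b, hb, hb'⟩), h, rfl, rfl⟩)))
  · rintro (⟨rfl, rfl⟩ | ⟨rfl, rfl⟩ | ⟨h1, h2⟩ | ⟨h1, h2⟩ | ⟨q, hq, rfl, rfl⟩)
    · unfold build; rw [dif_pos rfl]
    · unfold build; rw [dif_neg hii, dif_pos rfl, Fin.rev_rev]
    · rw [h2, ← h1]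
      unfold build
      by_cases hk : a = i
      · rw [dif_pos hk, hk]
      · rw [dif_neg hk]
        by_cases hk' : a = Fin.rev i
        · rw [dif_pos hk', hk']
        · rw [dif_neg hk', dif_pos rfl]
    · have hk : k = Fin.rev a := by rw [h1, Fin.rev_rev]
      rw [h2, hk]
      unfold build
      by_cases hk : a = i
      · rw [dif_pos hk, hk]
      · rw [dif_neg hk]
        by_cases hk' : a = Fin.rev i
        · rw [dif_pos hk', hk', Fin.rev_rev]
        · rw [dif_neg hk', dif_neg hii, dif_pos rfl]
    · unfold build
      rw [dif_neg q.1.2.1, dif_neg q.1.2.2, dif_neg q.2.2.1, dif_neg q.2.2.2]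
      exact hq

include hii in
lemma build_fiber_card (f : Cmpl i × Cmpl i → Fin n) (k : Fin n) :
    (univ.filter fun p : Fin n × Fin n => build i f p.1 p.2 = k).card
      = (univ.filter fun q : Cmpl i × Cmpl i => f q = k).card
        + (if k = i ∨ k = Fin.rev i then 2 else 4) := by
  classical
  have hinj : Function.Injective
      (fun q : Cmpl i × Cmpl i => ((q.1.1, q.2.1) : Fin n × Fin n)) := by
    rintro ⟨⟨a, ha⟩, ⟨b, hb⟩⟩ ⟨⟨c, hc⟩, ⟨d, hd⟩⟩ h
    simp only [Prod.mk.injEq, Subtype.mk.injEq] at h ⊢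
    exact h
  have hfilter : (univ.filter fun p : Fin n × Fin n => build i f p.1 p.2 = k)
      = ({(i, k), (Fin.rev i, Fin.rev k), (k, i), (Fin.rev k, Fin.rev i)} : Finset (Fin n × Fin n))
        ∪ (univ.filter fun q : Cmpl i × Cmpl i => f q = k).map ⟨_, hinj⟩ := by
    ext p
    simp only [mem_filter, mem_union, Finset.mem_map, mem_insert, mem_singleton, mem_univ, true_and,
      Function.Embedding.coeFn_mk, build_eq_iff i hii f k p]
    constructor
    · rintro (h | h | h | h | ⟨q, hq, hp⟩)
      · exact Or.inl (Or.inl h)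
      · exact Or.inl (Or.inr (Or.inl h))
      · exact Or.inl (Or.inr (Or.inr (Or.inl h)))
      · exact Or.inl (Or.inr (Or.inr (Or.inr h)))
      · exact Or.inr ⟨q, hq, hp.symm⟩
    · rintro ((h | h | h | h) | ⟨q, hq, hp⟩)
      · exact Or.inl h
      · exact Or.inr (Or.inl h)
      · exact Or.inr (Or.inr (Or.inl h))
      · exact Or.inr (Or.inr (Or.inr (Or.inl h)))
      · exact Or.inr (Or.inr (Or.inr (Or.inr ⟨q, hq, hp.symm⟩)))
  have hdisj : Disjoint
      ({(i, k), (Fin.rev i, Fin.rev k), (k, i), (Fin.rev k, Fin.rev i)} : Finset (Fin n × Fin n))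
      ((univ.filter fun q : Cmpl i × Cmpl i => f q = k).map ⟨_, hinj⟩) := by
    rw [Finset.disjoint_left]
    intro p hp hp2
    simp only [Finset.mem_map, mem_filter, mem_univ, true_and, Function.Embedding.coeFn_mk] at hp2
    obtain ⟨q, -, rfl⟩ := hp2
    simp only [mem_insert, mem_singleton, Prod.mk.injEq] at hp
    rcases hp with h | h | h | h
    · exact q.1.2.1 h.1
    · exact q.1.2.2 h.1
    · exact q.2.2.1 h.2
    · exact q.2.2.2 h.2
  rw [hfilter, Finset.card_union_of_disjoint hdisj, Finset.card_map, add_comm]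
  congr 1
  by_cases hk1 : k = i
  · rw [if_pos (Or.inl hk1), hk1]
    have hTT : ({(i, i), (Fin.rev i, Fin.rev i), (i, i), (Fin.rev i, Fin.rev i)} :
        Finset (Fin n × Fin n)) = {(i, i), (Fin.rev i, Fin.rev i)} := by
      ext p; simp only [mem_insert, mem_singleton]; tauto
    rw [hTT, Finset.card_pair (fun h => hii (Prod.ext_iff.mp h).1.symm)]
  · by_cases hk2 : k = Fin.rev i
    · rw [if_pos (Or.inr hk2), hk2, Fin.rev_rev]
      have hTT : ({(i, Fin.rev i), (Fin.rev i, i), (Fin.rev i, i), (i, Fin.rev i)} :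
          Finset (Fin n × Fin n)) = {(i, Fin.rev i), (Fin.rev i, i)} := by
        ext p; simp only [mem_insert, mem_singleton]; tauto
      rw [hTT, Finset.card_pair (fun h => hii (Prod.ext_iff.mp h).1.symm)]
    · rw [if_neg (by tauto)]
      have h1 := i.isLt
      have h2 := k.isLt
      simp only [Ne, Fin.ext_iff, rev_val] at hk1 hk2
      rw [Finset.card_insert_of_notMem, Finset.card_insert_of_notMem,
        Finset.card_insert_of_notMem, Finset.card_singleton] <;>
        simp only [mem_insert, mem_singleton, Prod.mk.injEq, not_or, Fin.ext_iff, rev_val,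
          not_and] <;> omega

section CountLemma
variable {α β : Type*} [Fintype α] [DecidableEq α] [Fintype β] [DecidableEq β]
set_option linter.unusedSectionVars false
lemma sigma_mk_cast {m : β → ℕ} (z : Σ b, Fin (m b)) (b : β) (h : z.1 = b) :
    (⟨b, Fin.cast (congrArg m h) z.2⟩ : Σ b, Fin (m b)) = z := by subst h; rfl

/-- Equivalence between bijections `α ≃ Σ b, Fin (m b)` and pairs of a function `f : α → β`
together with equivalences of its fibers with `Fin (m b)`. -/
def fibEquiv (m : β → ℕ) :
    (α ≃ (Σ b, Fin (m b))) ≃ (Σ f : α → β, ∀ b, {a // f a = b} ≃ Fin (m b)) where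
  toFun e := ⟨fun a => (e a).1, fun b =>
    { toFun := fun x => Fin.cast (congrArg m x.2) (e x.1).2
      invFun := fun y => ⟨e.symm ⟨b, y⟩, by simp⟩
      left_inv := by
        rintro ⟨a, h⟩
        simp only at h ⊢
        subst h
        simp [Sigma.eta]
      right_inv := by
        intro y
        apply Fin.ext
        simp only [Fin.coe_cast]
        exact congrArg (fun w : (Σ b, Fin (m b)) => (w.2 : ℕ)) (e.apply_symm_apply ⟨b, y⟩) }⟩
  invFun p := (Equiv.sigmaFiberEquiv p.1).symm.trans (Equiv.sigmaCongrRight p.2)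
  left_inv e := by
    refine Equiv.ext fun a => ?_
    exact sigma_mk_cast (e a) _ rfl
  right_inv := by
    rintro ⟨f, w⟩
    refine Sigma.ext rfl (heq_of_eq ?_)
    funext b
    ext x
    rcases x with ⟨a, h⟩
    subst h
    simp [Equiv.sigmaFiberEquiv, Equiv.sigmaCongrRight]
    rfl

theorem card_fiber_eq_mul (m : β → ℕ) (hm : ∑ b, m b = Fintype.card α) :
    Fintype.card {f : α → β // ∀ b, Fintype.card {a // f a = b} = m b} * ∏ b, (m b)!
      = (Fintype.card α)! := by
  classical
  have h1 : Fintype.card (α ≃ Σ b, Fin (m b)) = (Fintype.card α)! := by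
    refine Fintype.card_equiv (Fintype.equivOfCardEq ?_)
    simp [hm]
  rw [← h1, Fintype.card_congr (fibEquiv m), Fintype.card_sigma]
  have h2 : ∀ f : α → β, Fintype.card (∀ b, {a // f a = b} ≃ Fin (m b)) =
      if (∀ b, Fintype.card {a // f a = b} = m b) then ∏ b, (m b)! else 0 := by
    intro f
    rw [Fintype.card_pi]
    split_ifs with h
    · refine Finset.prod_congr rfl fun b _ => ?_
      rw [Fintype.card_equiv (Fintype.equivOfCardEq (by simp [h b]))]
      simp [h b]
    · push_neg at h
      obtain ⟨b, hb⟩ := h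
      refine Finset.prod_eq_zero (mem_univ b) ?_
      refine Fintype.card_eq_zero_iff.mpr ⟨fun e => hb ?_⟩
      simpa using Fintype.card_congr e
  refine Eq.symm ?_
  calc ∑ f : α → β, Fintype.card (∀ b, {a // f a = b} ≃ Fin (m b))
      = ∑ f : α → β, if (∀ b, Fintype.card {a // f a = b} = m b) then ∏ b, (m b)! else 0 :=
        Finset.sum_congr rfl fun f _ => h2 f
    _ = ∑ f ∈ univ.filter (fun f : α → β => ∀ b, Fintype.card {a // f a = b} = m b),
          ∏ b, (m b)! := by rw [Finset.sum_filter]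
    _ = Fintype.card {f : α → β // ∀ b, Fintype.card {a // f a = b} = m b} * ∏ b, (m b)! := by
        rw [Finset.sum_const, smul_eq_mul, Fintype.card_subtype]

theorem card_fiber_eq_mul_nat (m : β → ℕ) (hm : ∑ b, m b = Nat.card α) :
    Nat.card {f : α → β // ∀ b, Nat.card {a // f a = b} = m b} * ∏ b, (m b)!
      = (Nat.card α)! := by
  have e : {f : α → β // ∀ b, Nat.card {a // f a = b} = m b} ≃
      {f : α → β // ∀ b, Fintype.card {a // f a = b} = m b} :=
    Equiv.subtypeEquivRight fun f => forall_congr' fun b => by rw [Nat.card_eq_fintype_card]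
  rw [Nat.card_congr e, Nat.card_eq_fintype_card, Nat.card_eq_fintype_card]
  exact card_fiber_eq_mul m (by rw [← Nat.card_eq_fintype_card]; exact hm)

end CountLemma

lemma equi_iff {n : ℕ} (g : Fin n → Fin n → Fin n) : IsEquiSquare n g ↔
    ∀ k, (univ.filter fun p : Fin n × Fin n => g p.1 p.2 = k).card = n := by
  unfold IsEquiSquare
  refine forall_congr' fun k => ?_
  rw [Nat.card_eq_fintype_card, Fintype.card_subtype]

def mfun (n : ℕ) (i : Fin n) : Fin n → ℕ := fun k => if k = i ∨ k = Fin.rev i then n - 2 else n - 4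

def S1equiv (hn : 4 ≤ n) (hii : Fin.rev i ≠ i) :
    {g : Fin n → Fin n → Fin n // IsEquiSquare n g ∧ Pat1 i g} ≃
      {f : Cmpl i × Cmpl i → Fin n // ∀ k, Nat.card {q // f q = k} = mfun n i k} where
  toFun g := ⟨fun q => g.1 q.1.1 q.2.1, by
    obtain ⟨g, hE, hP⟩ := g
    intro k
    show Nat.card {q : Cmpl i × Cmpl i // g q.1.1 q.2.1 = k} = mfun n i k
    rw [Nat.card_eq_fintype_card]
    have hb : ∀ a b, build i (fun q => g q.1.1 q.2.1) a b = g a b := build_restrict i hii g hP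
    have h1 := build_fiber_card i hii (fun q => g q.1.1 q.2.1) k
    have h2 : (univ.filter fun p : Fin n × Fin n =>
        build i (fun q => g q.1.1 q.2.1) p.1 p.2 = k)
        = (univ.filter fun p : Fin n × Fin n => g p.1 p.2 = k) := by
      refine Finset.filter_congr fun p _ => ?_
      rw [hb]
    rw [h2, (equi_iff g).mp hE k] at h1
    rw [Fintype.card_subtype]
    unfold mfun
    beta_reduce at h1 ⊢
    split_ifs at h1 ⊢ <;> omega⟩
  invFun f := ⟨build i f.1, by
    rw [equi_iff]
    intro k
    rw [build_fiber_card i hii f.1 k, ← Fintype.card_subtype, ← Nat.card_eq_fintype_card, f.2 k]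
    unfold mfun
    split_ifs <;> omega, build_pat1 i hii f.1⟩
  left_inv g := by
    apply Subtype.ext
    funext a b
    exact build_restrict i hii g.1 g.2.2 a b
  right_inv f := by
    apply Subtype.ext
    funext q
    show build i f.1 q.1.1 q.2.1 = f.1 q
    unfold build
    rw [dif_neg q.1.2.1, dif_neg q.1.2.2, dif_neg q.2.2.1, dif_neg q.2.2.2]

include hii in
lemma card_cmpl : Fintype.card (Cmpl i) = n - 2 := by
  rw [Fintype.card_subtype]
  have h : (univ.filter fun a : Fin n => a ≠ i ∧ a ≠ Fin.rev i) = univ \ {i, Fin.rev i} := by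
    ext a
    simp only [mem_filter, mem_univ, true_and, Finset.mem_sdiff, mem_insert, mem_singleton, not_or]
  rw [h, Finset.card_sdiff_of_subset (by simp), Finset.card_pair (fun h' => hii h'.symm), Finset.card_univ,
    Fintype.card_fin]

include hii in
lemma filterPair : (univ.filter fun k : Fin n => k = i ∨ k = Fin.rev i) = {i, Fin.rev i} := by
  ext k
  simp only [mem_filter, mem_univ, true_and, mem_insert, mem_singleton]

include hii in
lemma card_cmpl_nat : Nat.card (Cmpl i) = n - 2 := by
  rw [Nat.card_eq_fintype_card, card_cmpl i hii]

include hii in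
lemma sum_mfun (hn : 4 ≤ n) : ∑ k, mfun n i k = Nat.card (Cmpl i × Cmpl i) := by
  rw [Nat.card_eq_fintype_card, Fintype.card_prod, card_cmpl i hii]
  unfold mfun
  rw [Finset.sum_ite, Finset.sum_const, Finset.sum_const, filterPair i hii,
    Finset.filter_not, filterPair i hii,
    Finset.card_pair (fun h' => hii h'.symm), Finset.card_sdiff_of_subset (by simp), Finset.card_univ,
    Fintype.card_fin, Finset.card_pair (fun h' => hii h'.symm), smul_eq_mul, smul_eq_mul]
  obtain ⟨m, rfl⟩ : ∃ m, n = m + 4 := ⟨n - 4, by omega⟩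
  have e1 : m + 4 - 2 = m + 2 := by omega
  have e2 : m + 4 - 4 = m := by omega
  rw [e1, e2]
  ring

include hii in
lemma prod_mfun : ∏ k, (mfun n i k)! = (n - 2)! ^ 2 * (n - 4)! ^ (n - 2) := by
  unfold mfun
  have h : ∀ k : Fin n, (if k = i ∨ k = Fin.rev i then n - 2 else n - 4)! =
      if k = i ∨ k = Fin.rev i then (n - 2)! else (n - 4)! := fun k => by split_ifs <;> rfl
  rw [Finset.prod_congr rfl fun k _ => h k, Finset.prod_ite, Finset.prod_const,
    Finset.prod_const, filterPair i hii, Finset.filter_not, filterPair i hii,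
    Finset.card_pair (fun h' => hii h'.symm), Finset.card_sdiff_of_subset (by simp), Finset.card_univ,
    Fintype.card_fin, Finset.card_pair (fun h' => hii h'.symm)]

lemma rev_eq_iff_val {n : ℕ} (x y : Fin n) : Fin.rev x = y ↔ (x : ℕ) + y + 1 = n := by
  have hx := x.isLt
  have hy := y.isLt
  rw [Fin.ext_iff, rev_val]
  omega

def revSq (n : ℕ) : (Fin n → Fin n → Fin n) ≃ (Fin n → Fin n → Fin n) where
  toFun g := fun a b => Fin.rev (g a b)
  invFun g := fun a b => Fin.rev (g a b)
  left_inv g := by funext a b; simp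
  right_inv g := by funext a b; simp

lemma equi_revSq {n : ℕ} (g : Fin n → Fin n → Fin n) :
    IsEquiSquare n g ↔ IsEquiSquare n (revSq n g) := by
  rw [equi_iff, equi_iff]
  constructor
  · intro h k
    have : (univ.filter fun p : Fin n × Fin n => revSq n g p.1 p.2 = k)
        = (univ.filter fun p : Fin n × Fin n => g p.1 p.2 = Fin.rev k) := by
      refine Finset.filter_congr fun p _ => ?_
      show Fin.rev (g p.1 p.2) = k ↔ _
      rw [Fin.rev_eq_iff]
    rw [this, h (Fin.rev k)]
  · intro h k
    have : (univ.filter fun p : Fin n × Fin n => g p.1 p.2 = k)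
        = (univ.filter fun p : Fin n × Fin n => revSq n g p.1 p.2 = Fin.rev k) := by
      refine Finset.filter_congr fun p _ => ?_
      show _ ↔ Fin.rev (g p.1 p.2) = Fin.rev k
      rw [Fin.rev_inj]
    rw [this, h (Fin.rev k)]

lemma pat_swap {n : ℕ} (i : Fin n) (g : Fin n → Fin n → Fin n) :
    Pat1 i (revSq n g) ↔ Pat2 i g := by
  unfold Pat1 Pat2 RowConsec RowRevConsec ColConsec ColRevConsec
  refine and_congr (forall_congr' fun j => ?_) (and_congr (forall_congr' fun j => ?_)
    (and_congr (forall_congr' fun a => ?_) (forall_congr' fun a => ?_)))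
  · exact rev_eq_iff_val _ _
  · show (Fin.rev (g (Fin.rev i) j) : ℕ) + j + 1 = n ↔ _
    rw [← rev_eq_iff_val, Fin.rev_rev]
  · exact rev_eq_iff_val _ _
  · show (Fin.rev (g a (Fin.rev i)) : ℕ) + a + 1 = n ↔ _
    rw [← rev_eq_iff_val, Fin.rev_rev]

def S2equivS1 {n : ℕ} (i : Fin n) :
    {g : Fin n → Fin n → Fin n // IsEquiSquare n g ∧ Pat2 i g} ≃
      {g : Fin n → Fin n → Fin n // IsEquiSquare n g ∧ Pat1 i g} :=
  Equiv.subtypeEquiv (revSq n) fun g =>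
    and_congr (equi_revSq g) (pat_swap i g).symm


set_option maxHeartbeats 2000000 in
/-- For `n ≥ 4` and a non-middle index `i` with opposite index `i' = n+1−i`
(1-indexed; here `i' = Fin.rev i`), the number of equi-`n`-squares whose rows `i`, `i'`
and columns `i`, `i'` are each consecutive or reverse-consecutive equals
`2·(n²−4n+4)! / ((n−2)!²·(n−4)!^{n−2})`. -/
theorem card_rowI_rowI'_colI_colI' (n : ℕ) (hn : 4 ≤ n) (i : Fin n)
    (hi : 2 * ((i : ℕ) + 1) ≠ n + 1) :
    (Nat.card {g : Fin n → Fin n → Fin n //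
        IsEquiSquare n g ∧ (RowConsec g i ∨ RowRevConsec g i) ∧
          (RowConsec g (Fin.rev i) ∨ RowRevConsec g (Fin.rev i)) ∧
          (ColConsec g i ∨ ColRevConsec g i) ∧
          (ColConsec g (Fin.rev i) ∨ ColRevConsec g (Fin.rev i))} : ℚ) =
      2 * ((n ^ 2 - 4 * n + 4)! : ℚ) / (((n - 2)! : ℚ) ^ 2 * ((n - 4)! : ℚ) ^ (n - 2)) := by
  classical
  have hii : Fin.rev i ≠ i := by
    have := i.isLt
    simp only [Ne, Fin.ext_iff, Fin.val_rev]
    omega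
  have e1 : {g : Fin n → Fin n → Fin n //
        IsEquiSquare n g ∧ (RowConsec g i ∨ RowRevConsec g i) ∧
          (RowConsec g (Fin.rev i) ∨ RowRevConsec g (Fin.rev i)) ∧
          (ColConsec g i ∨ ColRevConsec g i) ∧
          (ColConsec g (Fin.rev i) ∨ ColRevConsec g (Fin.rev i))} ≃
      {g : Fin n → Fin n → Fin n //
        (IsEquiSquare n g ∧ Pat1 i g) ∨ (IsEquiSquare n g ∧ Pat2 i g)} := by
    refine Equiv.subtypeEquivRight fun g => ?_
    constructor
    · rintro ⟨hE, hC⟩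
      rcases (resolve i hi g).mp hC with h | h
      exacts [Or.inl ⟨hE, h⟩, Or.inr ⟨hE, h⟩]
    · rintro (⟨hE, h⟩ | ⟨hE, h⟩)
      exacts [⟨hE, (resolve i hi g).mpr (Or.inl h)⟩, ⟨hE, (resolve i hi g).mpr (Or.inr h)⟩]
  have hdisj : Disjoint (fun g : Fin n → Fin n → Fin n => IsEquiSquare n g ∧ Pat1 i g)
      (fun g : Fin n → Fin n → Fin n => IsEquiSquare n g ∧ Pat2 i g) := by
    refine disjoint_iff_inf_le.mpr fun g hg => ?_
    exact absurd ⟨hg.1.2, hg.2.2⟩ (not_pat1_and_pat2 i hi g)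
  have e2 := subtypeOrEquiv _ _ hdisj
  have hN : Nat.card {g : Fin n → Fin n → Fin n //
        IsEquiSquare n g ∧ (RowConsec g i ∨ RowRevConsec g i) ∧
          (RowConsec g (Fin.rev i) ∨ RowRevConsec g (Fin.rev i)) ∧
          (ColConsec g i ∨ ColRevConsec g i) ∧
          (ColConsec g (Fin.rev i) ∨ ColRevConsec g (Fin.rev i))}
      = 2 * Nat.card {g : Fin n → Fin n → Fin n // IsEquiSquare n g ∧ Pat1 i g} := by
    rw [Nat.card_congr (e1.trans e2), Nat.card_sum, Nat.card_congr (S2equivS1 i), two_mul]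
  have key : Nat.card {g : Fin n → Fin n → Fin n // IsEquiSquare n g ∧ Pat1 i g}
      * ((n - 2)! ^ 2 * (n - 4)! ^ (n - 2)) = ((n - 2) * (n - 2))! := by
    have h := card_fiber_eq_mul_nat (mfun n i) (sum_mfun i hii hn)
    rw [prod_mfun i hii, Nat.card_prod, card_cmpl_nat i hii] at h
    rw [Nat.card_congr (S1equiv i hn hii)]
    exact h
  have hNpow : n ^ 2 - 4 * n + 4 = (n - 2) * (n - 2) := by
    obtain ⟨m, rfl⟩ : ∃ m, n = m + 4 := ⟨n - 4, by omega⟩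
    have h1 : (m + 4) ^ 2 = m * m + 8 * m + 16 := by ring
    have h2 : (m + 4 - 2) * (m + 4 - 2) = m * m + 4 * m + 4 := by
      have : m + 4 - 2 = m + 2 := by omega
      rw [this]; ring
    omega
  have hD : (((n - 2)! : ℚ) ^ 2 * ((n - 4)! : ℚ) ^ (n - 2)) ≠ 0 := by
    refine mul_ne_zero (pow_ne_zero _ ?_) (pow_ne_zero _ ?_) <;>
      exact_mod_cast Nat.factorial_ne_zero _
  rw [hN, hNpow]
  push_cast
  rw [eq_div_iff hD]
  have keyQ : (Nat.card {g : Fin n → Fin n → Fin n // IsEquiSquare n g ∧ Pat1 i g} : ℚ)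
      * (((n - 2)! : ℚ) ^ 2 * ((n - 4)! : ℚ) ^ (n - 2)) = (((n - 2) * (n - 2))! : ℚ) := by
    exact_mod_cast key
  linear_combination 2 * keyQ
end

section
/- The proportion of equi-n-squares that are consecutive tends to zero: |Σ_n|/|Ω_n| → 0 as n → ∞, where Ω_n is the set of equi-n-squares and Σ_n the set of consecutive equi-n-squares. -/
open Nat Finset Filter

/-- A consecutive equi-`n`-square: an equi-`n`-square with at least one consecutive or
reverse-consecutive row or column. -/
def IsConsecEquiSquare (n : ℕ) (g : Fin n → Fin n → Fin n) : Prop :=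
  IsEquiSquare n g ∧
    ((∃ i : Fin n, RowConsec g i ∨ RowRevConsec g i) ∨
      (∃ j : Fin n, ColConsec g j ∨ ColRevConsec g j))

open Nat Finset Filter

lemma update_row_equisquare {n : ℕ} {g : Fin n → Fin n → Fin n} {i : Fin n}
    (hg : IsEquiSquare n g) (π σ : Equiv.Perm (Fin n)) (hrow : ∀ j, g i j = π j) :
    IsEquiSquare n (Function.update g i ⇑σ) := by
  classical
  intro k
  have : Nat.card {p : Fin n × Fin n // Function.update g i (⇑σ) p.1 p.2 = k}
      = Nat.card {p : Fin n × Fin n // g p.1 p.2 = k} :=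
    Nat.card_congr (Equiv.subtypeEquiv (Equiv.prodShear (Equiv.refl (Fin n))
    (fun a => if a = i then σ.trans π.symm else Equiv.refl (Fin n))) (by
      rintro ⟨a, b⟩
      by_cases ha : a = i
      · subst ha
        simp [Function.update_self, hrow]
      · simp [Function.update_of_ne ha, ha]))
  rw [this, hg k]

lemma key_row (n : ℕ) (i : Fin n) (π : Equiv.Perm (Fin n)) :
    n.factorial * Nat.card {g : Fin n → Fin n → Fin n // IsEquiSquare n g ∧ ∀ j, g i j = π j}
      ≤ Nat.card {g : Fin n → Fin n → Fin n // IsEquiSquare n g} := by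
  classical
  set F : {g : Fin n → Fin n → Fin n // IsEquiSquare n g ∧ ∀ j, g i j = π j} × Equiv.Perm (Fin n)
      → {g : Fin n → Fin n → Fin n // IsEquiSquare n g} :=
    fun p => ⟨Function.update p.1.1 i ⇑p.2, update_row_equisquare p.1.2.1 π p.2 p.1.2.2⟩ with hFdef
  have hF : Function.Injective F := by
    rintro ⟨⟨g, hg, hrow⟩, σ⟩ ⟨⟨g', hg', hrow'⟩, σ'⟩ h
    simp only [hFdef, Subtype.mk_eq_mk] at h
    have hσ : (σ : Fin n → Fin n) = ⇑σ' := by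
      have := congrFun h i
      simpa [Function.update_self] using this
    have hgg : g = g' := by
      funext a b
      by_cases ha : a = i
      · subst ha; rw [hrow b, hrow' b]
      · have := congrFun (congrFun h a) b
        simpa [Function.update_of_ne ha] using this
    subst hgg
    simp [Prod.ext_iff, Equiv.coe_fn_injective hσ]
  have := Nat.card_le_card_of_injective F hF
  rw [Nat.card_prod] at this
  have hperm : Nat.card (Equiv.Perm (Fin n)) = n.factorial := by
    simp [Nat.card_eq_fintype_card, Fintype.card_perm]
  rw [hperm, mul_comm] at this
  exact this

/-- transpose preserves the equi-square property -/
lemma isEquiSquare_swap {n : ℕ} (g : Fin n → Fin n → Fin n) (hg : IsEquiSquare n g) :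
    IsEquiSquare n (Function.swap g) := by
  intro k
  have : Nat.card {p : Fin n × Fin n // Function.swap g p.1 p.2 = k}
      = Nat.card {p : Fin n × Fin n // g p.1 p.2 = k} :=
    Nat.card_congr (Equiv.subtypeEquiv (Equiv.prodComm (Fin n) (Fin n)) (by
      rintro ⟨a, b⟩; simp [Function.swap]))
  rw [this, hg k]

lemma key_col (n : ℕ) (j : Fin n) (π : Equiv.Perm (Fin n)) :
    n.factorial * Nat.card {g : Fin n → Fin n → Fin n // IsEquiSquare n g ∧ ∀ a, g a j = π a}
      ≤ Nat.card {g : Fin n → Fin n → Fin n // IsEquiSquare n g} := by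
  have hcongr : Nat.card {g : Fin n → Fin n → Fin n // IsEquiSquare n g ∧ ∀ a, g a j = π a}
      = Nat.card {g : Fin n → Fin n → Fin n // IsEquiSquare n g ∧ ∀ a, g j a = π a} := by
    refine Nat.card_congr (Equiv.subtypeEquiv
      (⟨Function.swap, Function.swap, fun _ => rfl, fun _ => rfl⟩ :
        (Fin n → Fin n → Fin n) ≃ (Fin n → Fin n → Fin n)) ?_)
    intro g
    constructor
    · rintro ⟨h1, h2⟩
      exact ⟨isEquiSquare_swap g h1, h2⟩
    · rintro ⟨h1, h2⟩
      exact ⟨by simpa [Function.swap] using isEquiSquare_swap _ h1, h2⟩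
  rw [hcongr]
  exact key_row n j π

lemma rowRev_iff {n : ℕ} (g : Fin n → Fin n → Fin n) (i : Fin n) :
    RowRevConsec g i ↔ ∀ j : Fin n, g i j = Fin.revPerm j := by
  constructor
  · intro h j
    have := h j
    have h1 := (g i j).isLt
    have h2 := j.isLt
    ext
    simp only [Fin.revPerm_apply, Fin.val_rev]
    omega
  · intro h j
    have := congrArg Fin.val (h j)
    simp only [Fin.revPerm_apply, Fin.val_rev] at this
    have h2 := j.isLt
    omega

lemma main_bound (n : ℕ) :
    n.factorial * Nat.card {g : Fin n → Fin n → Fin n // IsConsecEquiSquare n g}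
      ≤ 4 * n * Nat.card {g : Fin n → Fin n → Fin n // IsEquiSquare n g} := by
  classical
  set Ω := Nat.card {g : Fin n → Fin n → Fin n // IsEquiSquare n g} with hΩ
  set A : Fin n → Finset (Fin n → Fin n → Fin n) := fun i =>
    univ.filter (fun g => IsEquiSquare n g ∧ ∀ j, g i j = (Equiv.refl (Fin n)) j) with hA
  set B : Fin n → Finset (Fin n → Fin n → Fin n) := fun i =>
    univ.filter (fun g => IsEquiSquare n g ∧ ∀ j, g i j = Fin.revPerm j) with hB
  set C : Fin n → Finset (Fin n → Fin n → Fin n) := fun j =>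
    univ.filter (fun g => IsEquiSquare n g ∧ ∀ a, g a j = (Equiv.refl (Fin n)) a) with hC
  set D : Fin n → Finset (Fin n → Fin n → Fin n) := fun j =>
    univ.filter (fun g => IsEquiSquare n g ∧ ∀ a, g a j = Fin.revPerm a) with hD
  have cardfil : ∀ (p : (Fin n → Fin n → Fin n) → Prop) [DecidablePred p],
      (univ.filter p).card = Nat.card {g // p g} := by
    intro p _
    rw [Nat.card_eq_fintype_card, Fintype.card_subtype]
  have hAb : ∀ i, n.factorial * (A i).card ≤ Ω := by
    intro i; rw [hA]; rw [cardfil]; exact key_row n i (Equiv.refl _)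
  have hBb : ∀ i, n.factorial * (B i).card ≤ Ω := by
    intro i; rw [hB]; rw [cardfil]; exact key_row n i Fin.revPerm
  have hCb : ∀ j, n.factorial * (C j).card ≤ Ω := by
    intro j; rw [hC]; rw [cardfil]; exact key_col n j (Equiv.refl _)
  have hDb : ∀ j, n.factorial * (D j).card ≤ Ω := by
    intro j; rw [hD]; rw [cardfil]; exact key_col n j Fin.revPerm
  have hsub : univ.filter (IsConsecEquiSquare n) ⊆
      ((univ : Finset (Fin n)).biUnion fun i => A i ∪ B i) ∪
      ((univ : Finset (Fin n)).biUnion fun j => C j ∪ D j) := by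
    intro g hg
    simp only [mem_filter, mem_univ, true_and] at hg
    obtain ⟨heq, h | h⟩ := hg
    · obtain ⟨i, h | h⟩ := h
      · refine mem_union_left _ (mem_biUnion.2 ⟨i, mem_univ _, mem_union_left _ ?_⟩)
        simp only [hA, mem_filter, mem_univ, true_and, Equiv.refl_apply]
        exact mem_filter.2 ⟨mem_univ _, heq, h⟩
      · refine mem_union_left _ (mem_biUnion.2 ⟨i, mem_univ _, mem_union_right _ ?_⟩)
        simp only [hB, mem_filter, mem_univ, true_and]
        exact ⟨heq, (rowRev_iff g i).1 h⟩
    · obtain ⟨j, h | h⟩ := h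
      · refine mem_union_right _ (mem_biUnion.2 ⟨j, mem_univ _, mem_union_left _ ?_⟩)
        simp only [hC, mem_filter, mem_univ, true_and, Equiv.refl_apply]
        exact mem_filter.2 ⟨mem_univ _, heq, h⟩
      · refine mem_union_right _ (mem_biUnion.2 ⟨j, mem_univ _, mem_union_right _ ?_⟩)
        simp only [hD, mem_filter, mem_univ, true_and]
        refine ⟨heq, fun a => ?_⟩
        have := h a
        have h1 := (g a j).isLt
        have h2 := a.isLt
        ext
        simp only [Fin.revPerm_apply, Fin.val_rev]
        omega
  have h1 : (univ.filter (IsConsecEquiSquare n)).card ≤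
      (∑ i : Fin n, ((A i).card + (B i).card)) + ∑ j : Fin n, ((C j).card + (D j).card) :=
    calc (univ.filter (IsConsecEquiSquare n)).card
        ≤ _ := card_le_card hsub
      _ ≤ ((univ : Finset (Fin n)).biUnion fun i => A i ∪ B i).card
            + ((univ : Finset (Fin n)).biUnion fun j => C j ∪ D j).card := card_union_le _ _
      _ ≤ (∑ i : Fin n, (A i ∪ B i).card) + ∑ j : Fin n, (C j ∪ D j).card :=
          Nat.add_le_add (card_biUnion_le) (card_biUnion_le)
      _ ≤ _ := Nat.add_le_add (sum_le_sum fun i _ => card_union_le _ _)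
          (sum_le_sum fun j _ => card_union_le _ _)
  have hX : n.factorial * ∑ i : Fin n, ((A i).card + (B i).card) ≤ n * (2 * Ω) := by
    rw [Finset.mul_sum]
    calc ∑ i : Fin n, n.factorial * ((A i).card + (B i).card)
        ≤ ∑ _i : Fin n, 2 * Ω := sum_le_sum fun i _ => by
          have h1 := hAb i; have h2 := hBb i
          rw [Nat.mul_add]; omega
      _ = n * (2 * Ω) := by simp [Finset.sum_const, smul_eq_mul]
  have hY : n.factorial * ∑ j : Fin n, ((C j).card + (D j).card) ≤ n * (2 * Ω) := by
    rw [Finset.mul_sum]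
    calc ∑ j : Fin n, n.factorial * ((C j).card + (D j).card)
        ≤ ∑ _j : Fin n, 2 * Ω := sum_le_sum fun j _ => by
          have h1 := hCb j; have h2 := hDb j
          rw [Nat.mul_add]; omega
      _ = n * (2 * Ω) := by simp [Finset.sum_const, smul_eq_mul]
  calc n.factorial * Nat.card {g : Fin n → Fin n → Fin n // IsConsecEquiSquare n g}
      = n.factorial * (univ.filter (IsConsecEquiSquare n)).card := by rw [cardfil]
    _ ≤ n.factorial * ((∑ i : Fin n, ((A i).card + (B i).card))
          + ∑ j : Fin n, ((C j).card + (D j).card)) := Nat.mul_le_mul_left _ h1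
    _ = n.factorial * ∑ i : Fin n, ((A i).card + (B i).card)
          + n.factorial * ∑ j : Fin n, ((C j).card + (D j).card) := Nat.mul_add _ _ _
    _ ≤ n * (2 * Ω) + n * (2 * Ω) := Nat.add_le_add hX hY
    _ = 4 * n * Ω := by ring

/-- The proportion of equi-`n`-squares that are consecutive tends to zero. -/
theorem prob_consecEquiSquares_tendsto_zero :
    Filter.Tendsto
      (fun n : ℕ =>
        (Nat.card {g : Fin n → Fin n → Fin n // IsConsecEquiSquare n g} : ℝ) /
          (Nat.card {g : Fin n → Fin n → Fin n // IsEquiSquare n g} : ℝ))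
      Filter.atTop (nhds 0) := by
  have hub : ∀ n : ℕ, 2 ≤ n →
      (Nat.card {g : Fin n → Fin n → Fin n // IsConsecEquiSquare n g} : ℝ) /
        (Nat.card {g : Fin n → Fin n → Fin n // IsEquiSquare n g} : ℝ) ≤ 4 / ((n : ℝ) - 1) := by
    intro n hn
    set S := Nat.card {g : Fin n → Fin n → Fin n // IsConsecEquiSquare n g} with hS
    set Ω := Nat.card {g : Fin n → Fin n → Fin n // IsEquiSquare n g} with hΩ'
    have hn1 : (0 : ℝ) < (n : ℝ) - 1 := by
      have : (2 : ℝ) ≤ (n : ℝ) := by exact_mod_cast hn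
      linarith
    rcases Nat.eq_zero_or_pos Ω with hΩ0 | hΩpos
    · rw [hΩ0]
      simp only [Nat.cast_zero, div_zero]
      positivity
    · have hfac : n * (n - 1) ≤ n.factorial := by
        have h1 : n.factorial = n * (n - 1).factorial := by
          obtain ⟨m, rfl⟩ : ∃ m, n = m + 1 := ⟨n - 1, by omega⟩
          simp [Nat.factorial_succ]
        rw [h1]
        exact Nat.mul_le_mul_left n (Nat.self_le_factorial _)
      have hmb := main_bound n
      have key : (n - 1) * S ≤ 4 * Ω := by
        have h2 : n * ((n - 1) * S) ≤ n * (4 * Ω) := by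
          calc n * ((n - 1) * S) = n * (n - 1) * S := by ring
            _ ≤ n.factorial * S := Nat.mul_le_mul_right S hfac
            _ ≤ 4 * n * Ω := hmb
            _ = n * (4 * Ω) := by ring
        exact Nat.le_of_mul_le_mul_left h2 (by omega)
      rw [div_le_div_iff₀ (by exact_mod_cast hΩpos) hn1]
      have hcast : (S : ℝ) * ((n : ℝ) - 1) = (((n - 1) * S : ℕ) : ℝ) := by
        push_cast [Nat.cast_sub (by omega : 1 ≤ n)]
        ring
      rw [hcast]
      calc (((n - 1) * S : ℕ) : ℝ) ≤ ((4 * Ω : ℕ) : ℝ) := by exact_mod_cast key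
        _ = 4 * (Ω : ℝ) := by push_cast; ring
  have hg : Tendsto (fun n : ℕ => 4 / ((n : ℝ) - 1)) atTop (nhds 0) := by
    apply Tendsto.div_atTop (tendsto_const_nhds)
    have := tendsto_atTop_add_const_right atTop (-1 : ℝ) tendsto_natCast_atTop_atTop
    simpa [sub_eq_add_neg] using this
  refine tendsto_of_tendsto_of_tendsto_of_le_of_le' tendsto_const_nhds hg
    (Filter.Eventually.of_forall fun n => by positivity) ?_
  filter_upwards [Filter.eventually_ge_atTop 2] with n hn
  exact hub n hn
end
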